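/- A polynomial f(x) = Σ_{i=0}^n f_i x^i with nonnegative coefficients is alternatingly increasing (i.e., f_0 ≤ f_n ≤ f_1 ≤ f_{n-1} ≤ ... ≤ f_{⌊(n+1)/2⌋}) if both polynomials a(x) and b(x) in its symmetric decomposition f = a + x·b are unimodal with nonnegative coefficients. -/

import Mathlib

open Polynomial

/-- A polynomial is unimodal if its coefficient sequence weakly increases up to
some index `k` and weakly decreases afterwards. -/
def Unimodal (p : Polynomial ℝ) : Prop :=
  ∃ k : ℕ, (∀ i j : ℕ, i ≤ j → j ≤ k → p.coeff i ≤ p.coeff j) ∧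
    (∀ i j : ℕ, k ≤ i → i ≤ j → p.coeff j ≤ p.coeff i)

/-- A polynomial of degree `n` is alternatingly increasing if
`f₀ ≤ fₙ ≤ f₁ ≤ f_{n-1} ≤ ⋯ ≤ f_{⌊(n+1)/2⌋}`. -/
def AlternatinglyIncreasing (n : ℕ) (f : Polynomial ℝ) : Prop :=
  (∀ i : ℕ, i ≤ n - i → f.coeff i ≤ f.coeff (n - i)) ∧
  (∀ i : ℕ, i + 1 ≤ n - i → f.coeff (n - i) ≤ f.coeff (i + 1))

private lemma reflect_invol' (N : ℕ) (p : Polynomial ℝ) : reflect N (reflect N p) = p := by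
  ext i
  rw [coeff_reflect, coeff_reflect, revAt_invol]

/-- A symmetric unimodal polynomial is increasing up to the middle. -/
private lemma sym_unimodal_step (c : Polynomial ℝ) (m : ℕ)
    (hsym : ∀ j, j ≤ m → c.coeff j = c.coeff (m - j))
    (hU : Unimodal c) {j : ℕ} (hj1 : 1 ≤ j) (hj2 : 2 * j ≤ m + 1) :
    c.coeff (j - 1) ≤ c.coeff j := by
  obtain ⟨k, hinc, hdec⟩ := hU
  by_cases hk : j ≤ k
  · exact hinc (j - 1) j (Nat.sub_le j 1) hk
  · push_neg at hk
    have h1 : c.coeff (j - 1) = c.coeff (m - (j - 1)) := hsym (j - 1) (by omega)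
    rw [h1]
    exact hdec j (m - (j - 1)) (by omega) (by omega)

/-- If both parts of the symmetric decomposition `f = a + X·b` are unimodal with
nonnegative coefficients, then `f` is alternatingly increasing. -/
theorem alternatingly_increasing_of_unimodal_decomposition (n : ℕ) (f a b : Polynomial ℝ)
    (hf : f.natDegree = n) (hcoeff : ∀ i, 0 ≤ f.coeff i)
    (ha : (1 - X) * a = f - X * reflect n f)
    (hb : (1 - X) * b = reflect n f - f)
    (haU : Unimodal a) (haPos : ∀ i, 0 ≤ a.coeff i)
    (hbU : Unimodal b) (hbPos : ∀ i, 0 ≤ b.coeff i) :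
    AlternatinglyIncreasing n f := by
  rcases Nat.eq_zero_or_pos n with rfl | hn
  · constructor
    · intro i hi
      have : i = 0 := by omega
      subst this; simp
    · intro i hi
      exact absurd hi (by omega)
  -- basic nonvanishing / degree facts
  have hX0 : (1 - X : Polynomial ℝ) ≠ 0 := by
    intro h
    have h1 : ((1 : Polynomial ℝ) - X).coeff 1 = (0 : Polynomial ℝ).coeff 1 := by rw [h]
    simp [coeff_one] at h1
  have hdeg1X : (1 - X : Polynomial ℝ).natDegree = 1 := by
    have : (1 - X : Polynomial ℝ) = -(X - C 1) := by rw [C_1]; ring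
    rw [this, natDegree_neg, natDegree_X_sub_C]
  have hfdeg : ∀ k, n < k → f.coeff k = 0 := fun k hk =>
    coeff_eq_zero_of_natDegree_lt (hf ▸ hk)
  have hrfdeg : (reflect n f).natDegree ≤ n := by
    rw [natDegree_le_iff_coeff_eq_zero]
    intro k hk
    rw [coeff_reflect]
    by_cases h : k ≤ n
    · omega
    · rw [show revAt n k = k from if_neg h]
      exact hfdeg k hk
  have hrf : ∀ k, k ≤ n → (reflect n f).coeff k = f.coeff (n - k) := fun k hk => by
    rw [coeff_reflect, revAt_le hk]
  -- coefficients of b beyond n - 1 vanish, and degree bound for b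
  have hbdeg : b.natDegree ≤ n - 1 := by
    by_cases hb0 : b = 0
    · simp [hb0]
    have hd : ((1 - X) * b).natDegree ≤ n := by
      rw [hb]
      refine le_trans (natDegree_sub_le _ _) ?_
      simp [hrfdeg, hf.le]
    rw [natDegree_mul hX0 hb0, hdeg1X] at hd
    omega
  -- symmetry of b : reflect (n-1) b = b
  have hreflb : reflect (n - 1) b = b := by
    have e1 : reflect n ((1 - X) * b) = reflect 1 (1 - X) * reflect (n - 1) b := by
      have := reflect_mul (1 - X) b hdeg1X.le hbdeg
      rwa [show 1 + (n - 1) = n by omega] at this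
    have e2 : reflect 1 ((1 : Polynomial ℝ) - X) = X - 1 := by
      rw [reflect_sub]
      have r1 : reflect 1 ((1 : Polynomial ℝ)) = X := by
        simpa using reflect_C (1 : ℝ) 1
      rw [r1, reflect_one_X]
    have e3 : reflect n ((1 - X) * b) = f - reflect n f := by
      rw [hb, reflect_sub, reflect_invol']
    have e4 : (X - 1 : Polynomial ℝ) * reflect (n - 1) b = (X - 1) * b := by
      have h5 : (X - 1 : Polynomial ℝ) * reflect (n - 1) b = f - reflect n f := by
        rw [← e2, ← e1, e3]
      rw [h5]
      linear_combination hb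
    have hX1 : (X - 1 : Polynomial ℝ) ≠ 0 := by
      intro h
      exact hX0 (by linear_combination -h)
    exact mul_left_cancel₀ hX1 e4
  have hsymb : ∀ j, j ≤ n - 1 → b.coeff j = b.coeff (n - 1 - j) := by
    intro j hj
    conv_lhs => rw [← hreflb]
    rw [coeff_reflect, revAt_le hj]
  -- a + b = reflect n f
  have hab : a + b = reflect n f := by
    apply mul_left_cancel₀ hX0
    rw [mul_add, ha, hb]
    ring
  -- coefficient recurrence for b
  have recb : ∀ i, i + 1 ≤ n →
      b.coeff (i + 1) - b.coeff i = f.coeff (n - (i + 1)) - f.coeff (i + 1) := by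
    intro i hi
    have h := congrArg (fun p => p.coeff (i + 1)) hb
    simp only [sub_mul, one_mul, coeff_sub, coeff_X_mul] at h
    rw [hrf (i + 1) hi] at h
    linarith
  have b0 : b.coeff 0 = f.coeff n - f.coeff 0 := by
    have h := congrArg (fun p => p.coeff 0) hb
    simp only [sub_mul, one_mul, coeff_sub, mul_coeff_zero, coeff_X_zero, zero_mul] at h
    rw [hrf 0 (Nat.zero_le n), Nat.sub_zero] at h
    linarith
  -- coefficients of a
  have acoeff : ∀ j, j ≤ n → a.coeff j = f.coeff (n - j) - b.coeff j := by
    intro j hj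
    have h := congrArg (fun p => p.coeff j) hab
    simp only [coeff_add] at h
    rw [hrf j hj] at h
    linarith
  -- symmetry of a at level n (coefficientwise)
  have hsyma : ∀ j, j ≤ n → a.coeff j = a.coeff (n - j) := by
    intro j hj
    rcases Nat.eq_zero_or_pos j with rfl | hj1
    · have h1 := acoeff 0 (Nat.zero_le n)
      have h2 := acoeff n le_rfl
      have hbn : b.coeff n = 0 := coeff_eq_zero_of_natDegree_lt (by omega)
      rw [Nat.sub_zero] at h1
      rw [Nat.sub_self] at h2
      rw [Nat.sub_zero, h1, h2, hbn, b0]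
      ring
    · have h1 := acoeff j hj
      have h2 := acoeff (n - j) (Nat.sub_le n j)
      have e1 : n - (n - j) = j := by omega
      rw [e1] at h2
      have h3 : b.coeff (n - j) = b.coeff (j - 1) := by
        have := hsymb (n - j) (by omega)
        rwa [show n - 1 - (n - j) = j - 1 by omega] at this
      have h4 := recb (j - 1) (by omega)
      rw [show j - 1 + 1 = j by omega] at h4
      rw [h1, h2, h3]
      linarith
  constructor
  · intro i hi
    rcases Nat.eq_zero_or_pos i with rfl | hi1
    · rw [Nat.sub_zero]
      have := hbPos 0
      linarith [b0]
    · obtain ⟨j, rfl⟩ : ∃ j, i = j + 1 := ⟨i - 1, by omega⟩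
      have h4 := recb j (by omega)
      have h5 := sym_unimodal_step b (n - 1) hsymb hbU (j := j + 1) (by omega) (by omega)
      rw [show j + 1 - 1 = j by omega] at h5
      linarith
  · intro i hi
    have ha1 := acoeff i (by omega)
    have ha2 := acoeff (i + 1) (by omega)
    have h4 := recb i (by omega)
    have h5 := sym_unimodal_step a n hsyma haU (j := i + 1) (by omega) (by omega)
    rw [show i + 1 - 1 = i by omega] at h5
    linarith
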